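/- arXiv:1512.03127 — 10 statements merged into one kernel-verified Lean document; each statement's English description precedes it below -/
import Mathlib

section
/- Let L be a first-order language with finitely many symbols, all of them relation symbols, let A and B be finite L-structures, and let S be a set of relation symbols of L. Then the following are equivalent: (1) there exists an L-homomorphism from B to A, and for every n, every n-ary relation symbol R in S, and every tuple b : Fin n → B not in the interpretation of R in B, there exists an L-homomorphism f : B → A with f ∘ b not in the interpretation of R in A; (2) every S-restricted universal Horn sentence that is true in A is true in B. -/
open FirstOrder

universe u v

/-- An atomic formula in `n` variables: either an equality between two variables or a
relation symbol applied to variables. -/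
inductive HornAtomic (L : FirstOrder.Language.{u, v}) (n : ℕ) : Type v
  | eq (i j : Fin n) : HornAtomic L n
  | rel {m : ℕ} (R : L.Relations m) (t : Fin m → Fin n) : HornAtomic L n

def HornAtomic.Realize {L : FirstOrder.Language.{u, v}} {n : ℕ} {M : Type*}
    [L.Structure M] (w : Fin n → M) : HornAtomic L n → Prop
  | .eq i j => w i = w j
  | .rel R t => Language.Structure.RelMap R (fun k => w (t k))

/-- A universal Horn sentence: the universal closure (over `n` variables) of a Horn clause,
presented as a finite list of negated atomic disjuncts (the premises) together with an
optional non-negated atomic disjunct (the head). -/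
structure HornSentence (L : FirstOrder.Language.{u, v}) : Type v where
  n : ℕ
  premises : List (HornAtomic L n)
  head : Option (HornAtomic L n)

/-- Truth of a universal Horn sentence in a structure `M`. -/
def HornSentence.Realize {L : FirstOrder.Language.{u, v}} (φ : HornSentence L)
    (M : Type*) [L.Structure M] : Prop :=
  ∀ w : Fin φ.n → M, (∀ ψ ∈ φ.premises, ψ.Realize w) →
    (match φ.head with
      | some ψ => ψ.Realize w
      | none => False)

/-- A universal Horn sentence is `S`-restricted if its non-negated disjunct, when present,
is a relational atomic formula whose relation symbol belongs to `S`. -/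
def HornSentence.Restricted {L : FirstOrder.Language.{u, v}}
    (S : ∀ m, Set (L.Relations m)) (φ : HornSentence L) : Prop :=
  match φ.head with
  | none => True
  | some (.eq _ _) => False
  | some (.rel R _) => R ∈ S _

lemma HornAtomic.realize_map {L : FirstOrder.Language.{u, v}} {n : ℕ}
    {A B : Type*} [L.Structure A] [L.Structure B] (f : B →[L] A)
    (ψ : HornAtomic L n) (w : Fin n → B) (h : ψ.Realize w) :
    ψ.Realize (fun i => f (w i)) := by
  cases ψ with
  | eq i j => exact congrArg f h
  | rel R t => exact f.map_rel R _ h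

/-- For a finite purely relational language `L`, finite `L`-structures
`A` and `B`, and a set `S` of relation symbols of `L`: `B` admits a homomorphism to `A`
with all relations of `S` unfrozen-in if and only if `B` satisfies every `S`-restricted
universal Horn sentence true in `A`. -/
theorem stmt_1 {L : FirstOrder.Language.{u, v}} (hfun : ∀ n, IsEmpty (L.Functions n))
    (hrel : Finite (Σ n, L.Relations n))
    {A B : Type*} [L.Structure A] [L.Structure B] [Finite A] [Finite B]
    (S : ∀ m, Set (L.Relations m)) :
    ((Nonempty (B →[L] A)) ∧
      ∀ (n : ℕ) (R : L.Relations n), R ∈ S n → ∀ b : Fin n → B,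
        ¬ Language.Structure.RelMap R b →
          ∃ f : B →[L] A, ¬ Language.Structure.RelMap R (fun i => f (b i))) ↔
    (∀ φ : HornSentence L, φ.Restricted S → φ.Realize A → φ.Realize B) := by
  classical
  haveI := hrel
  constructor
  · rintro ⟨⟨f0⟩, hS⟩ ⟨n, prem, head⟩ hres hA w hw
    cases head with
    | none =>
        exact hA (fun i => f0 (w i)) (fun ψ hψ => ψ.realize_map f0 w (hw ψ hψ))
    | some ψ =>
        cases ψ with
        | eq i j => exact hres.elim
        | rel R t =>
            by_contra hB
            obtain ⟨f, hf⟩ := hS _ R hres _ hB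
            exact hf (hA (fun i => f (w i)) (fun ψ hψ => ψ.realize_map f w (hw ψ hψ)))
  · intro H
    obtain ⟨n, ⟨e⟩⟩ := Finite.exists_equiv_fin B
    haveI : Fintype (Σ p : (Σ m, L.Relations m), (Fin p.1 → B)) := Fintype.ofFinite _
    set prem : List (HornAtomic L n) :=
      ((Finset.univ.filter fun t : Σ p : (Σ m, L.Relations m), (Fin p.1 → B) =>
          Language.Structure.RelMap t.1.2 t.2).toList).map
        (fun t => HornAtomic.rel t.1.2 (fun k => e (t.2 k))) with hprem
    have hmem : ∀ {m : ℕ} (R : L.Relations m) (b : Fin m → B),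
        Language.Structure.RelMap R b →
        HornAtomic.rel R (fun k => e (b k)) ∈ prem := by
      intro m R b hb
      rw [hprem]
      refine List.mem_map.2 ⟨⟨⟨m, R⟩, b⟩, ?_, rfl⟩
      simp [Finset.mem_toList, hb]
    have hsat : ∀ ψ ∈ prem, ψ.Realize (fun i => e.symm i : Fin n → B) := by
      intro ψ hψ
      rw [hprem] at hψ
      obtain ⟨t, ht, rfl⟩ := List.mem_map.1 hψ
      simp only [Finset.mem_toList, Finset.mem_filter] at ht
      show Language.Structure.RelMap t.1.2 (fun k => e.symm (e (t.2 k)))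
      simpa using ht.2
    have mkhom : ∀ w : Fin n → A, (∀ ψ ∈ prem, ψ.Realize w) →
        ∃ f : B →[L] A, ∀ b, f b = w (e b) := by
      intro w hw
      refine ⟨⟨fun b => w (e b), fun {m} fn => (hfun m).elim fn, ?_⟩, fun b => rfl⟩
      intro m R x hx
      exact hw _ (hmem R x hx)
    constructor
    · have hnB : ¬ HornSentence.Realize ⟨n, prem, none⟩ B :=
        fun h => h (fun i => e.symm i) hsat
      have hnA : ¬ HornSentence.Realize ⟨n, prem, none⟩ A :=
        fun h => hnB (H _ trivial h)
      obtain ⟨w, hw⟩ : ∃ w : Fin n → A, ∀ ψ ∈ prem, ψ.Realize w := by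
        by_contra hc
        push_neg at hc
        exact hnA fun w hw => by
          obtain ⟨ψ, hψ, hnψ⟩ := hc w
          exact hnψ (hw ψ hψ)
      obtain ⟨f, -⟩ := mkhom w hw
      exact ⟨f⟩
    · intro m R hR b hb
      have hnB : ¬ HornSentence.Realize ⟨n, prem, some (.rel R (fun k => e (b k)))⟩ B := by
        intro h
        have h2 : Language.Structure.RelMap R (fun k => e.symm (e (b k))) :=
          h (fun i => e.symm i) hsat
        apply hb
        simpa using h2
      have hnA : ¬ HornSentence.Realize ⟨n, prem, some (.rel R (fun k => e (b k)))⟩ A :=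
        fun h => hnB (H _ hR h)
      obtain ⟨w, hw, hwR⟩ : ∃ w : Fin n → A, (∀ ψ ∈ prem, ψ.Realize w) ∧
          ¬ Language.Structure.RelMap R (fun k => w (e (b k))) := by
        by_contra hc
        push_neg at hc
        exact hnA fun w hw => hc w hw
      obtain ⟨f, hf⟩ := mkhom w hw
      refine ⟨f, fun h => hwR ?_⟩
      have : (fun i => f (b i)) = fun k => w (e (b k)) := funext fun i => hf (b i)
      rwa [this] at h
end

section
/- Let G be a simple graph. The following are equivalent: (1) there exist a nonempty index type ι and an injective map f from the vertices of G to functions ι → Fin 3 such that whenever u and v are adjacent in G, f(u)(i) ≠ f(v)(i) for every i ∈ ι (that is, G is isomorphic to a not-necessarily-induced subgraph of a nonempty direct power of the complete graph K₃); (2) G has a proper 3-colouring, and for every pair of distinct nonadjacent vertices u, v of G there is a proper 3-colouring c of G with c(u) ≠ c(v). -/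
universe u

/-- A simple graph `G` embeds as a (not necessarily induced) subgraph of a
nonempty direct power of the complete graph `K₃` if and only if `G` is `3`-colourable and
every pair of distinct nonadjacent vertices can be distinctly coloured by some proper
`3`-colouring. -/
theorem stmt_2 {V : Type u} (G : SimpleGraph V) :
    (∃ (ι : Type u) (_ : Nonempty ι) (f : V → ι → Fin 3),
      Function.Injective f ∧ ∀ u v : V, G.Adj u v → ∀ i : ι, f u i ≠ f v i) ↔
    ((∃ c : V → Fin 3, ∀ u v : V, G.Adj u v → c u ≠ c v) ∧
      ∀ u v : V, u ≠ v → ¬ G.Adj u v →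
        ∃ c : V → Fin 3, (∀ x y : V, G.Adj x y → c x ≠ c y) ∧ c u ≠ c v) := by
  constructor
  · rintro ⟨ι, ⟨i₀⟩, f, hinj, hadj⟩
    refine ⟨⟨fun v => f v i₀, fun u v h => hadj u v h i₀⟩, ?_⟩
    intro u v huv hnadj
    have : f u ≠ f v := fun h => huv (hinj h)
    obtain ⟨i, hi⟩ := Function.ne_iff.mp this
    exact ⟨fun v => f v i, fun x y h => hadj x y h i, hi⟩
  · rintro ⟨⟨c₀, hc₀⟩, h2⟩
    classical
    refine ⟨(V × V) ⊕ PUnit.{u+1}, ⟨Sum.inr PUnit.unit⟩, ?_⟩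
    set col : V × V → V → Fin 3 := fun p =>
      if h : p.1 ≠ p.2 ∧ ¬ G.Adj p.1 p.2 then (h2 p.1 p.2 h.1 h.2).choose else c₀
      with hcol
    have colProper : ∀ p, ∀ x y, G.Adj x y → col p x ≠ col p y := by
      intro p x y h
      rw [hcol]
      simp only
      split
      · next hc => exact (h2 p.1 p.2 hc.1 hc.2).choose_spec.1 x y h
      · exact hc₀ x y h
    refine ⟨fun v => Sum.elim (fun p => col p v) (fun _ => c₀ v), ?_, ?_⟩
    · intro u v huv
      by_contra hne
      have h1 : ∀ i, Sum.elim (fun p => col p u) (fun _ => c₀ u) i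
          = Sum.elim (fun p => col p v) (fun _ => c₀ v) i := fun i =>
        congrFun huv i
      by_cases hadj : G.Adj u v
      · exact hc₀ u v hadj (h1 (Sum.inr PUnit.unit))
      · have key := h1 (Sum.inl (u, v))
        simp only [Sum.elim_inl] at key
        have hcond : (u, v).1 ≠ (u, v).2 ∧ ¬ G.Adj (u, v).1 (u, v).2 := ⟨hne, hadj⟩
        rw [hcol] at key
        simp only [dif_pos hcond] at key
        exact (h2 u v hne hadj).choose_spec.2 key
    · intro u v h i
      cases i with
      | inl p => exact colProper p u v h
      | inr _ => exact hc₀ u v h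
end

section
/- Let D₃ denote the simple graph on vertex set {0,1,2,3} whose edges are {0,1}, {0,2}, {1,2}, {1,3}, {2,3} (the complete graph on {0,1,2} together with an extra vertex 3 adjacent to exactly 1 and 2). For any simple graph G, the following are equivalent: (1) G has a proper 3-colouring and, for every pair of vertices u, v that are not adjacent in G, there is a proper 3-colouring c of G with c(u) = c(v); (2) there exist a nonempty index type ι and an injective map f from the vertices of G to functions ι → {0,1,2,3} such that for all vertices u, v: u and v are adjacent in G if and only if f(u)(i) and f(v)(i) are adjacent in D₃ for every i ∈ ι (that is, G is isomorphic to an induced subgraph of a nonempty direct power of D₃). -/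
universe u

/-- The graph `D₃` on `{0,1,2,3}`: the complete graph on `{0,1,2}` together with the extra
vertex `3` adjacent to exactly `1` and `2` (i.e. all pairs of distinct vertices are
adjacent except the pair `{0,3}`). -/
def D3 : SimpleGraph (Fin 4) where
  Adj u v := u ≠ v ∧ ¬((u = 0 ∧ v = 3) ∨ (u = 3 ∧ v = 0))
  symm := by
    constructor
    intro u v h
    refine ⟨h.1.symm, ?_⟩
    rintro (⟨h1, h2⟩ | ⟨h1, h2⟩)
    · exact h.2 (Or.inr ⟨h2, h1⟩)
    · exact h.2 (Or.inl ⟨h2, h1⟩)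
  loopless := by
    constructor
    intro u h
    exact h.1 rfl

instance : DecidableRel D3.Adj := fun u v =>
  decidable_of_iff (u ≠ v ∧ ¬((u = 0 ∧ v = 3) ∨ (u = 3 ∧ v = 0))) Iff.rfl

lemma d3_cast {a b : Fin 3} (h : a ≠ b) : D3.Adj a.castSucc b.castSucc := by revert a b h; decide
lemma d3_three_left {a : Fin 3} (h : a ≠ 0) : D3.Adj 3 a.castSucc := by revert a h; decide
lemma d3_three_right {a : Fin 3} (h : a ≠ 0) : D3.Adj a.castSucc 3 := by revert a h; decide
lemma cast_ne_three (a : Fin 3) : a.castSucc ≠ (3 : Fin 4) := by revert a; decide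
lemma col_eq {x y : Fin 4} (h : ¬ D3.Adj x y) :
    (![0,1,2,0] : Fin 4 → Fin 3) x = ![0,1,2,0] y := by revert x y h; decide
lemma col_ne {x y : Fin 4} (h : D3.Adj x y) :
    (![0,1,2,0] : Fin 4 → Fin 3) x ≠ ![0,1,2,0] y := by revert x y h; decide

/-- A simple graph `G` is `3`-colourable with every pair of nonadjacent
vertices identifiable by some proper `3`-colouring if and only if `G` is isomorphic to an
induced subgraph of a nonempty direct power of `D₃`. -/
theorem stmt_3 {V : Type u} (G : SimpleGraph V) :
    ((∃ c : V → Fin 3, ∀ u v : V, G.Adj u v → c u ≠ c v) ∧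
      ∀ u v : V, ¬ G.Adj u v →
        ∃ c : V → Fin 3, (∀ x y : V, G.Adj x y → c x ≠ c y) ∧ c u = c v) ↔
    (∃ (ι : Type u) (_ : Nonempty ι) (f : V → ι → Fin 4),
      Function.Injective f ∧
        ∀ u v : V, G.Adj u v ↔ ∀ i : ι, D3.Adj (f u i) (f v i)) := by
  constructor
  · rintro ⟨⟨c₀, hc₀⟩, hpair⟩
    classical
    refine ⟨{c : V → Fin 3 // ∀ x y, G.Adj x y → c x ≠ c y} ⊕ V, ⟨Sum.inl ⟨c₀, hc₀⟩⟩,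
      fun v i => Sum.rec (fun c => ((c.1 v).castSucc : Fin 4))
        (fun w => if v = w then (3 : Fin 4) else ((Equiv.swap 0 (c₀ w)) (c₀ v)).castSucc) i,
      ?_, ?_⟩
    · intro u v h
      by_contra hne
      have := congrFun h (Sum.inr u)
      simp only [if_pos rfl, if_neg (fun hvu : v = u => hne hvu.symm)] at this
      exact cast_ne_three _ this.symm
    · intro u v
      constructor
      · intro hadj i
        rcases i with c | w
        · exact d3_cast (c.2 u v hadj)
        · by_cases hu : u = w
          · have hv : ¬ v = w := fun hv => (G.ne_of_adj hadj) (hu.trans hv.symm)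
            simp only [if_pos hu, if_neg hv]
            refine d3_three_left ?_
            intro h0
            have : c₀ v = c₀ w :=
              (Equiv.swap 0 (c₀ w)).injective (a₁ := c₀ v) (a₂ := c₀ w) (by simp [h0])
            exact hc₀ u v hadj (by rw [hu, this])
          · by_cases hv : v = w
            · simp only [if_neg hu, if_pos hv]
              refine d3_three_right ?_
              intro h0
              have : c₀ u = c₀ w :=
                (Equiv.swap 0 (c₀ w)).injective (a₁ := c₀ u) (a₂ := c₀ w) (by simp [h0])
              exact hc₀ u v hadj (by rw [hv, this])
            · simp only [if_neg hu, if_neg hv]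
              exact d3_cast (fun h => hc₀ u v hadj ((Equiv.swap 0 (c₀ w)).injective h))
      · intro h
        by_contra hadj
        obtain ⟨c, hc, heq⟩ := hpair u v hadj
        have := h (Sum.inl ⟨c, hc⟩)
        simp only [heq] at this
        exact D3.loopless.irrefl _ this
  · rintro ⟨ι, ⟨i₀⟩, f, hf, hadj⟩
    constructor
    · exact ⟨fun v => ![0,1,2,0] (f v i₀),
        fun u v h => col_ne ((hadj u v).1 h i₀)⟩
    · intro u v h
      have : ¬ ∀ i, D3.Adj (f u i) (f v i) := fun hh => h ((hadj u v).2 hh)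
      push_neg at this
      obtain ⟨i, hi⟩ := this
      exact ⟨fun x => ![0,1,2,0] (f x i),
        fun x y hxy => col_ne ((hadj x y).1 hxy i), col_eq hi⟩
end

section
/- Let G be a simple graph. The following are equivalent: (1) G has a proper 3-colouring; for every pair of vertices u, v not adjacent in G there is a proper 3-colouring c of G with c(u) = c(v); and for every pair of distinct vertices u, v there is a proper 3-colouring c of G with c(u) ≠ c(v); (2) there exist a nonempty index type ι and an injective map f from the vertices of G to functions ι → Fin 3 such that for all vertices u, v: u and v are adjacent in G if and only if f(u)(i) ≠ f(v)(i) for every i ∈ ι (that is, G is isomorphic to an induced subgraph of a nonempty direct power of the complete graph K₃). -/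
universe u

/-- A simple graph `G` is `3`-colourable, with every pair of nonadjacent
vertices identifiable and every pair of distinct vertices separable by proper
`3`-colourings, if and only if `G` is isomorphic to an induced subgraph of a nonempty
direct power of the complete graph `K₃`. -/
theorem stmt_4 {V : Type u} (G : SimpleGraph V) :
    ((∃ c : V → Fin 3, ∀ u v : V, G.Adj u v → c u ≠ c v) ∧
      (∀ u v : V, ¬ G.Adj u v →
        ∃ c : V → Fin 3, (∀ x y : V, G.Adj x y → c x ≠ c y) ∧ c u = c v) ∧
      (∀ u v : V, u ≠ v →
        ∃ c : V → Fin 3, (∀ x y : V, G.Adj x y → c x ≠ c y) ∧ c u ≠ c v)) ↔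
    (∃ (ι : Type u) (_ : Nonempty ι) (f : V → ι → Fin 3),
      Function.Injective f ∧
        ∀ u v : V, G.Adj u v ↔ ∀ i : ι, f u i ≠ f v i) := by
  constructor
  · rintro ⟨⟨c0, hc0⟩, hid, hsep⟩
    refine ⟨{c : V → Fin 3 // ∀ x y : V, G.Adj x y → c x ≠ c y}, ⟨⟨c0, hc0⟩⟩,
      fun v i => i.1 v, ?_, ?_⟩
    · intro u v huv
      by_contra hne
      obtain ⟨c, hc, hcne⟩ := hsep u v hne
      exact hcne (congrFun huv ⟨c, hc⟩)
    · intro u v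
      constructor
      · intro hadj i
        exact i.2 u v hadj
      · intro h
        by_contra hnadj
        obtain ⟨c, hc, hceq⟩ := hid u v hnadj
        exact h ⟨c, hc⟩ hceq
  · rintro ⟨ι, ⟨i0⟩, f, hinj, hiff⟩
    refine ⟨⟨fun v => f v i0, fun u v h => (hiff u v).1 h i0⟩, ?_, ?_⟩
    · intro u v hnadj
      have : ¬ ∀ i : ι, f u i ≠ f v i := fun h => hnadj ((hiff u v).2 h)
      push_neg at this
      obtain ⟨i, hi⟩ := this
      exact ⟨fun x => f x i, fun x y h => (hiff x y).1 h i, hi⟩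
    · intro u v hne
      have : f u ≠ f v := fun h => hne (hinj h)
      obtain ⟨i, hi⟩ := Function.ne_iff.1 this
      exact ⟨fun x => f x i, fun x y h => (hiff x y).1 h i, hi⟩
end

section
/- Let I be a monotone NAE3SAT instance over a finite variable set X, and let k ≥ 1. Then I is NAE-satisfiable if and only if the instance I^♯ is NAE-satisfiable. -/
/-- An assignment `ν` NAE-satisfies a monotone NAE-SAT instance `I` (a finite set of
clauses, each a finite set of variables) if `ν` is not constant on any clause. -/
def NAESat {X : Type} (I : Finset (Finset X)) (ν : X → Bool) : Prop :=
  ∀ C ∈ I, ∃ x ∈ C, ∃ y ∈ C, ν x ≠ ν y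

/-- An assignment `μ` of the variables `X × Fin (2k+1)` NAE-satisfies the Gottlob power
instance `I^♯`: for each clause `C` of `I` and each choice of a `(k+1)`-element subset
`J x` of `Fin (2k+1)` for the variables `x ∈ C`, the assignment `μ` is not constant on
the corresponding `(3k+3)`-element clause `⋃ x ∈ C, {x} × J x`. -/
def SharpSat {X : Type} (k : ℕ) (I : Finset (Finset X))
    (μ : X × Fin (2 * k + 1) → Bool) : Prop :=
  ∀ C ∈ I, ∀ J : X → Finset (Fin (2 * k + 1)),
    (∀ x ∈ C, (J x).card = k + 1) →
      ∃ x ∈ C, ∃ j ∈ J x, ∃ y ∈ C, ∃ j' ∈ J y, μ (x, j) ≠ μ (y, j')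

/-- A monotone NAE3SAT instance `I` is NAE-satisfiable iff the Gottlob
power instance `I^♯` is NAE-satisfiable. -/
theorem stmt_6 {X : Type} [Fintype X] (I : Finset (Finset X)) (k : ℕ) (hk : 1 ≤ k)
    (h3 : ∀ C ∈ I, C.card = 3) :
    (∃ ν : X → Bool, NAESat I ν) ↔
      ∃ μ : X × Fin (2 * k + 1) → Bool, SharpSat k I μ := by
  classical
  constructor
  · rintro ⟨ν, hν⟩
    refine ⟨fun p => ν p.1, ?_⟩
    intro C hC J hJ
    obtain ⟨x, hx, y, hy, hxy⟩ := hν C hC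
    have hx' : (J x).Nonempty := Finset.card_pos.mp (by rw [hJ x hx]; omega)
    have hy' : (J y).Nonempty := Finset.card_pos.mp (by rw [hJ y hy]; omega)
    obtain ⟨j, hj⟩ := hx'
    obtain ⟨j', hj'⟩ := hy'
    exact ⟨x, hx, j, hj, y, hy, j', hj', hxy⟩
  · rintro ⟨μ, hμ⟩
    set ν : X → Bool := fun x =>
      decide (k + 1 ≤ (Finset.univ.filter (fun j : Fin (2 * k + 1) => μ (x, j) = true)).card)
      with hνdef
    have hmaj : ∀ x, k + 1 ≤
        (Finset.univ.filter (fun j : Fin (2 * k + 1) => μ (x, j) = ν x)).card := by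
      intro x
      by_cases h : k + 1 ≤ (Finset.univ.filter (fun j : Fin (2 * k + 1) => μ (x, j) = true)).card
      · have hx : ν x = true := by simp [hνdef, h]; omega
        simpa [hx] using h
      · have hx : ν x = false := by simp [hνdef, h]; omega
        have hsum := Finset.card_filter_add_card_filter_not
          (s := (Finset.univ : Finset (Fin (2 * k + 1))))
          (p := fun j => μ (x, j) = true)
        have hcompl : (Finset.univ.filter (fun j : Fin (2 * k + 1) => ¬ μ (x, j) = true))
            = (Finset.univ.filter (fun j : Fin (2 * k + 1) => μ (x, j) = false)) := by
          apply Finset.filter_congr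
          intro j _
          simp [Bool.not_eq_true]
        rw [hcompl] at hsum
        simp only [Finset.card_univ, Fintype.card_fin] at hsum
        rw [hx]
        omega
    refine ⟨fun x => ν x, ?_⟩
    intro C hC
    by_contra hcon
    push_neg at hcon
    have hT : ∀ x, ∃ T ⊆ Finset.univ.filter (fun j : Fin (2 * k + 1) => μ (x, j) = ν x),
        T.card = k + 1 := fun x => Finset.exists_subset_card_eq (hmaj x)
    choose T hTsub hTcard using hT
    obtain ⟨x, hx, j, hj, y, hy, j', hj', hne⟩ := hμ C hC T (fun x _ => hTcard x)
    have h1 : μ (x, j) = ν x := (Finset.mem_filter.mp (hTsub x hj)).2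
    have h2 : μ (y, j') = ν y := (Finset.mem_filter.mp (hTsub y hj')).2
    exact hne (by rw [h1, h2, hcon x hx y hy])
end

section
/- Let I be a monotone NAE3SAT instance over a finite variable set X, and let k ≥ 1. If I is NAE-satisfiable, then I^♯ is k-robustly NAE-satisfiable: for every partial function p from X × {1,…,2k+1} to Bool whose domain has at most k elements, there is a total assignment extending p that NAE-satisfies I^♯. -/
/-- If a monotone NAE3SAT instance `I` is NAE-satisfiable, then `I^♯` is
`k`-robustly NAE-satisfiable: every partial assignment defined on at most `k` of the
variables of `I^♯` extends to a NAE-satisfying assignment of `I^♯`. -/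
theorem stmt_7 {X : Type} [Fintype X] (I : Finset (Finset X)) (k : ℕ) (hk : 1 ≤ k)
    (h3 : ∀ C ∈ I, C.card = 3) (hsat : ∃ ν : X → Bool, NAESat I ν)
    (D : Finset (X × Fin (2 * k + 1))) (hD : D.card ≤ k)
    (p : X × Fin (2 * k + 1) → Bool) :
    ∃ μ : X × Fin (2 * k + 1) → Bool, SharpSat k I μ ∧ ∀ x ∈ D, μ x = p x := by
  classical
  obtain ⟨ν, hν⟩ := hsat
  refine ⟨fun z => if z ∈ D then p z else ν z.1, ?_, fun z hz => by simp [hz]⟩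
  intro C hC J hJ
  obtain ⟨x, hx, y, hy, hxy⟩ := hν C hC
  have free : ∀ a : X, a ∈ C → ∃ j ∈ J a, (a, j) ∉ D := by
    intro a ha
    by_contra h
    push_neg at h
    have hsub : (J a).image (fun j => (a, j)) ⊆ D := by
      intro z hz
      obtain ⟨j, hj, rfl⟩ := Finset.mem_image.mp hz
      exact h j hj
    have hcard : ((J a).image (fun j => (a, j))).card = k + 1 := by
      rw [Finset.card_image_of_injective _ (fun i j h => by simpa using h)]
      exact hJ a ha
    have := Finset.card_le_card hsub
    omega
  obtain ⟨j, hj, hjD⟩ := free x hx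
  obtain ⟨j', hj', hj'D⟩ := free y hy
  exact ⟨x, hx, j, hj, y, hy, j', hj', by simp [hjD, hj'D, hxy]⟩
end

section
/- Let I be an NAE3SAT instance over a finite variable set X, where each clause is an ordered triple of literals whose underlying variables are pairwise distinct. Let 𝔾(I) be the graph constructed from I as described below. Then: (a) 𝔾(I) has a proper 3-colouring if and only if there is an assignment ν : X → Bool NAE-satisfying I; (b) every edge of 𝔾(I) lies in a 3-clique; (c) 𝔾(I) contains no 4-cycle, i.e., there do not exist four pairwise distinct vertices u₀, u₁, u₂, u₃ with u₀ adjacent to u₁, u₁ to u₂, u₂ to u₃, and u₃ to u₀. -/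
/-- A literal over variable set `X`: a variable with a sign (`true` = positive). -/
abbrev NLit (X : Type) := X × Bool

/-- A clause: an ordered triple of literals. -/
abbrev NClause (X : Type) := Fin 3 → NLit X

/-- The value of a literal under an assignment. -/
def nlitVal {X : Type} (ν : X → Bool) (l : NLit X) : Bool :=
  if l.2 then ν l.1 else !(ν l.1)

/-- `ν` NAE-satisfies the instance `I` if on every clause the three literal values are
not all equal. -/
def NAESat3 {X : Type} (I : Finset (NClause X)) (ν : X → Bool) : Prop :=
  ∀ e ∈ I, ¬(nlitVal ν (e 0) = nlitVal ν (e 1) ∧ nlitVal ν (e 1) = nlitVal ν (e 2))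

/-- The vertices of the graph `𝔾(I)`: a special vertex (`Sum.inl`), the literal vertices,
the clause position vertices, and the connector vertices. -/
abbrev GVert {X : Type} (I : Finset (NClause X)) : Type :=
  Unit ⊕ (X × Bool) ⊕ ({e : NClause X // e ∈ I} × Fin 3) ⊕ ({e : NClause X // e ∈ I} × Fin 3)

/-- The base edge relation of `𝔾(I)`: the special vertex is adjacent to every literal
vertex; the two literal vertices of a variable are adjacent; the three clause position
vertices of a clause are pairwise adjacent; and for each clause `e` and position `i`, the
literal vertex of the `i`-th literal of `e`, the connector vertex `c_{e,i}` and the clause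
position vertex `(e,i)` are pairwise adjacent. -/
def gRel {X : Type} (I : Finset (NClause X)) : GVert I → GVert I → Prop
  | Sum.inl _, Sum.inr (Sum.inl _) => True
  | Sum.inr (Sum.inl (v, s)), Sum.inr (Sum.inl (v', s')) => v = v' ∧ s ≠ s'
  | Sum.inr (Sum.inl l), Sum.inr (Sum.inr (Sum.inl (e, i))) => l = e.1 i
  | Sum.inr (Sum.inl l), Sum.inr (Sum.inr (Sum.inr (e, i))) => l = e.1 i
  | Sum.inr (Sum.inr (Sum.inl (e, _))), Sum.inr (Sum.inr (Sum.inl (e', _))) => e = e'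
  | Sum.inr (Sum.inr (Sum.inr (e, i))), Sum.inr (Sum.inr (Sum.inl (e', i'))) =>
      e = e' ∧ i = i'
  | _, _ => False

/-- The graph `𝔾(I)` constructed from an NAE3SAT instance `I`. -/
def GI {X : Type} (I : Finset (NClause X)) : SimpleGraph (GVert I) :=
  SimpleGraph.fromRel (gRel I)


-- decide lemmas
lemma fin3_aux1 : ∀ a x y : Fin 3, x ≠ y → x ≠ a → y ≠ a → (y = a+1 ↔ ¬ x = a+1) := by decide
lemma fin3_aux2 : ∀ β x y z : Fin 3, x≠y → x≠z → y≠z → x≠β → y≠β → z≠β → False := by decide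
lemma fin3_aux3' : ∀ i j k l : Fin 3, i = j ∨ i = k ∨ i = l ∨ j = k ∨ j = l ∨ k = l := by decide
lemma fin3_aux3 (i j k l : Fin 3) : i≠j→i≠k→i≠l→j≠k→j≠l→k≠l→ False := by
  have := fin3_aux3' i j k l; tauto
lemma fin3_aux4 : ∀ x y : Fin 3, x ≠ y → (-(x+y) ≠ x ∧ -(x+y) ≠ y) := by decide
lemma fin3_aux5 : ∀ a x : Fin 3, x ≠ a → x ≠ a+1 → x = a+2 := by decide
lemma fin3_third : ∀ i j : Fin 3, i ≠ j → ∃ k, k ≠ i ∧ k ≠ j := by decide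

def pch (b0 b1 b2 : Bool) : Fin 3 → Fin 3 :=
  match b0, b1, b2 with
  | true, true, false => ![1,2,0]
  | false, false, true => ![2,0,1]
  | true, false, true => ![1,0,2]
  | false, true, false => ![2,1,0]
  | true, false, false => ![1,0,2]
  | false, true, true => ![0,1,2]
  | _, _, _ => ![0,1,2]

lemma pch_spec : ∀ b0 b1 b2 : Bool, ¬(b0 = b1 ∧ b1 = b2) →
    (pch b0 b1 b2 0 ≠ (if b0 then 0 else 1)) ∧ (pch b0 b1 b2 1 ≠ (if b1 then 0 else 1)) ∧
    (pch b0 b1 b2 2 ≠ (if b2 then 0 else 1)) ∧ Function.Injective (pch b0 b1 b2) := by decide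

lemma GI_adj {X : Type} (I : Finset (NClause X)) (u v : GVert I) :
    (GI I).Adj u v ↔ u ≠ v ∧ (gRel I u v ∨ gRel I v u) := SimpleGraph.fromRel_adj _ _ _

section adj
variable {X : Type} {I : Finset (NClause X)}

lemma adjAL (l : NLit X) : (GI I).Adj (Sum.inl ()) (Sum.inr (Sum.inl l)) :=
  (GI_adj I _ _).2 ⟨by simp, Or.inl trivial⟩
lemma adjLL (v : X) {s s' : Bool} (h : s ≠ s') :
    (GI I).Adj (Sum.inr (Sum.inl (v, s))) (Sum.inr (Sum.inl (v, s'))) :=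
  (GI_adj I _ _).2 ⟨by simp [h], Or.inl ⟨rfl, h⟩⟩
lemma adjLP (e : {e : NClause X // e ∈ I}) (i : Fin 3) :
    (GI I).Adj (Sum.inr (Sum.inl (e.1 i))) (Sum.inr (Sum.inr (Sum.inl (e, i)))) :=
  (GI_adj I _ _).2 ⟨by simp, Or.inl rfl⟩
lemma adjLC (e : {e : NClause X // e ∈ I}) (i : Fin 3) :
    (GI I).Adj (Sum.inr (Sum.inl (e.1 i))) (Sum.inr (Sum.inr (Sum.inr (e, i)))) :=
  (GI_adj I _ _).2 ⟨by simp, Or.inl rfl⟩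
lemma adjPP (e : {e : NClause X // e ∈ I}) {i j : Fin 3} (h : i ≠ j) :
    (GI I).Adj (Sum.inr (Sum.inr (Sum.inl (e, i)))) (Sum.inr (Sum.inr (Sum.inl (e, j)))) :=
  (GI_adj I _ _).2 ⟨by simp [h], Or.inl rfl⟩
lemma adjCP (e : {e : NClause X // e ∈ I}) (i : Fin 3) :
    (GI I).Adj (Sum.inr (Sum.inr (Sum.inr (e, i)))) (Sum.inr (Sum.inr (Sum.inl (e, i)))) :=
  (GI_adj I _ _).2 ⟨by simp, Or.inl ⟨rfl, rfl⟩⟩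
end adj

def colB {X : Type} (I : Finset (NClause X)) (ν : X → Bool) : GVert I → Fin 3
  | Sum.inl _ => 2
  | Sum.inr (Sum.inl l) => if nlitVal ν l then 0 else 1
  | Sum.inr (Sum.inr (Sum.inl (e, i))) =>
      pch (nlitVal ν (e.1 0)) (nlitVal ν (e.1 1)) (nlitVal ν (e.1 2)) i
  | Sum.inr (Sum.inr (Sum.inr (e, i))) =>
      -((if nlitVal ν (e.1 i) then 0 else 1) +
        pch (nlitVal ν (e.1 0)) (nlitVal ν (e.1 1)) (nlitVal ν (e.1 2)) i)

lemma pch_ne {X : Type} {I : Finset (NClause X)} (ν : X → Bool)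
    (e : {e : NClause X // e ∈ I}) (hν : NAESat3 I ν) (i : Fin 3) :
    pch (nlitVal ν (e.1 0)) (nlitVal ν (e.1 1)) (nlitVal ν (e.1 2)) i ≠
      (if nlitVal ν (e.1 i) then 0 else 1) := by
  have h := pch_spec (nlitVal ν (e.1 0)) (nlitVal ν (e.1 1)) (nlitVal ν (e.1 2)) (hν e.1 e.2)
  fin_cases i
  · exact h.1
  · exact h.2.1
  · exact h.2.2.1

lemma colB_proper {X : Type} {I : Finset (NClause X)} (ν : X → Bool) (hν : NAESat3 I ν) :
    ∀ u v : GVert I, (GI I).Adj u v → colB I ν u ≠ colB I ν v := by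
  have key : ∀ u v : GVert I, u ≠ v → gRel I u v → colB I ν u ≠ colB I ν v := by
    rintro (_ | ⟨v, s⟩ | ⟨e, i⟩ | ⟨e, i⟩) (_ | ⟨v', s'⟩ | ⟨e', i'⟩ | ⟨e', i'⟩) hne hg <;>
        simp only [gRel] at hg <;> try exact hg.elim
    · -- a vs L
      simp only [colB]
      split <;> decide
    · -- L vs L
      obtain ⟨rfl, hs⟩ := hg
      simp only [colB, nlitVal]
      cases s <;> cases s' <;> simp_all <;> cases ν v <;> simp
    · -- L vs P
      simp only [colB]
      rw [hg]
      exact (pch_ne ν e' hν i').symm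
    · -- L vs C
      simp only [colB]
      rw [hg]
      exact ((fin3_aux4 _ _ (pch_ne ν e' hν i').symm).1).symm
    · -- P vs P
      obtain rfl := hg
      have hii : i ≠ i' := by rintro rfl; exact hne rfl
      simp only [colB]
      have h := (pch_spec (nlitVal ν (e.1 0)) (nlitVal ν (e.1 1)) (nlitVal ν (e.1 2))
        (hν e.1 e.2)).2.2.2
      exact fun h' => hii (h h')
    · -- C vs P
      obtain ⟨rfl, rfl⟩ := hg
      simp only [colB]
      exact (fin3_aux4 _ _ (pch_ne ν e hν i).symm).2
  intro u v huv
  rw [GI_adj] at huv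
  obtain ⟨hne, hg | hg⟩ := huv
  · exact key u v hne hg
  · exact (key v u hne.symm hg).symm

lemma forward_a {X : Type} {I : Finset (NClause X)} (c : GVert I → Fin 3)
    (hc : ∀ u v, (GI I).Adj u v → c u ≠ c v) : ∃ ν : X → Bool, NAESat3 I ν := by
  classical
  set a0 : Fin 3 := c (Sum.inl ()) with ha0
  set ν : X → Bool := fun v => decide (c (Sum.inr (Sum.inl (v, true))) = a0 + 1) with hν
  refine ⟨ν, ?_⟩
  have hA : ∀ l : NLit X, c (Sum.inr (Sum.inl l)) ≠ a0 :=
    fun l => (hc _ _ (adjAL l)).symm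
  have hval : ∀ l : NLit X,
      (nlitVal ν l = true ↔ c (Sum.inr (Sum.inl l)) = a0 + 1) := by
    rintro ⟨v, s⟩
    cases s
    · have hLL := hc _ _ (adjLL (I := I) v (Bool.noConfusion : true ≠ false))
      simpa [nlitVal, hν] using
        (fin3_aux1 a0 _ _ hLL (hA (v, true)) (hA (v, false))).symm
    · simp [nlitVal, hν]
  have hcc : ∀ l l' : NLit X, nlitVal ν l = nlitVal ν l' →
      c (Sum.inr (Sum.inl l)) = c (Sum.inr (Sum.inl l')) := by
    intro l l' hll
    rcases hb : nlitVal ν l with _ | _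
    · have hb' : nlitVal ν l' = false := hll ▸ hb
      rw [fin3_aux5 a0 _ (hA l) (fun hh => absurd ((hval l).2 hh) (by simp [hb])),
        fin3_aux5 a0 _ (hA l') (fun hh => absurd ((hval l').2 hh) (by simp [hb']))]
    · rw [(hval l).1 hb, (hval l').1 (hll ▸ hb)]
  intro e he h
  obtain ⟨h01, h12⟩ := h
  set ee : {e : NClause X // e ∈ I} := ⟨e, he⟩ with hee
  have hP : ∀ i : Fin 3, c (Sum.inr (Sum.inr (Sum.inl (ee, i)))) ≠
      c (Sum.inr (Sum.inl (e 0))) := by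
    intro i
    have h1 := (hc _ _ (adjLP ee i)).symm
    have h2 : c (Sum.inr (Sum.inl (ee.1 i))) = c (Sum.inr (Sum.inl (e 0))) := by
      fin_cases i
      · rfl
      · exact hcc _ _ h01.symm
      · exact hcc _ _ (h12.symm.trans h01.symm)
    rw [h2] at h1
    exact h1
  have hPP : ∀ i j : Fin 3, i ≠ j →
      c (Sum.inr (Sum.inr (Sum.inl (ee, i)))) ≠ c (Sum.inr (Sum.inr (Sum.inl (ee, j)))) :=
    fun i j hij => hc _ _ (adjPP ee hij)
  exact fin3_aux2 _ _ _ _ (hPP 0 1 (by decide)) (hPP 0 2 (by decide)) (hPP 1 2 (by decide))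
    (hP 0) (hP 1) (hP 2)

lemma part_b {X : Type} {I : Finset (NClause X)} :
    ∀ u v : GVert I, (GI I).Adj u v → ∃ w, (GI I).Adj u w ∧ (GI I).Adj v w := by
  have key : ∀ u v : GVert I, u ≠ v → gRel I u v →
      ∃ w, (GI I).Adj u w ∧ (GI I).Adj v w := by
    rintro (_ | ⟨v, s⟩ | ⟨e, i⟩ | ⟨e, i⟩) (_ | ⟨v', s'⟩ | ⟨e', i'⟩ | ⟨e', i'⟩) hne hg <;>
        simp only [gRel] at hg <;> try exact hg.elim
    · exact ⟨Sum.inr (Sum.inl (v', !s')), adjAL _, adjLL v' (by cases s' <;> simp)⟩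
    · exact ⟨Sum.inl (), (adjAL _).symm, (adjAL _).symm⟩
    · exact ⟨Sum.inr (Sum.inr (Sum.inr (e', i'))),
        by rw [hg]; exact adjLC e' i', (adjCP e' i').symm⟩
    · exact ⟨Sum.inr (Sum.inr (Sum.inl (e', i'))),
        by rw [hg]; exact adjLP e' i', adjCP e' i'⟩
    · obtain rfl := hg
      have hii : i ≠ i' := fun h => hne (by rw [h])
      obtain ⟨k, hki, hki'⟩ := fin3_third i i' hii
      exact ⟨Sum.inr (Sum.inr (Sum.inl (e, k))), adjPP e hki.symm, adjPP e hki'.symm⟩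
    · obtain ⟨rfl, rfl⟩ := hg
      exact ⟨Sum.inr (Sum.inl (e.1 i)), (adjLC e i).symm, (adjLP e i).symm⟩
  intro u v huv
  rw [GI_adj] at huv
  obtain ⟨hne, hg | hg⟩ := huv
  · exact key u v hne hg
  · obtain ⟨w, h1, h2⟩ := key v u hne.symm hg
    exact ⟨w, h2, h1⟩

set_option maxHeartbeats 4000000 in
lemma part_c {X : Type} {I : Finset (NClause X)}
    (hdist : ∀ e ∈ I, ∀ i j : Fin 3, i ≠ j → (e i).1 ≠ (e j).1) :
    ¬ ∃ u₀ u₁ u₂ u₃ : GVert I,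
        u₀ ≠ u₁ ∧ u₀ ≠ u₂ ∧ u₀ ≠ u₃ ∧ u₁ ≠ u₂ ∧ u₁ ≠ u₃ ∧ u₂ ≠ u₃ ∧
        (GI I).Adj u₀ u₁ ∧ (GI I).Adj u₁ u₂ ∧ (GI I).Adj u₂ u₃ ∧ (GI I).Adj u₃ u₀ := by
  rintro ⟨u₀, u₁, u₂, u₃, h01, h02, h03, h12, h13, h23, a01, a12, a23, a30⟩
  rw [GI_adj] at a01 a12 a23 a30
  obtain ⟨-, g01⟩ := a01
  obtain ⟨-, g12⟩ := a12
  obtain ⟨-, g23⟩ := a23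
  obtain ⟨-, g30⟩ := a30
  rcases u₀ with _ | ⟨v0, s0⟩ | ⟨e0, i0⟩ | ⟨e0, i0⟩ <;>
  rcases u₁ with _ | ⟨v1, s1⟩ | ⟨e1, i1⟩ | ⟨e1, i1⟩ <;>
  rcases u₂ with _ | ⟨v2, s2⟩ | ⟨e2, i2⟩ | ⟨e2, i2⟩ <;>
  rcases u₃ with _ | ⟨v3, s3⟩ | ⟨e3, i3⟩ | ⟨e3, i3⟩ <;>
    simp only [gRel, false_or, or_false, or_self] at g01 g12 g23 g30
  all_goals try casesm* _ ∨ _, _ ∧ _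
  all_goals subst_vars
  all_goals try simp_all
  all_goals try exact fin3_aux3 _ _ _ _ h01 h02 h03 h12 h13 h23
  all_goals try (
    have h1 : ∀ (e : {e : NClause X // e ∈ I}) (i j : Fin 3), ¬i = j → e.1 i = e.1 j → False :=
      fun e i j hij h => hdist e.1 e.2 i j hij (by rw [h])
    have h2 : ∀ (e : {e : NClause X // e ∈ I}) (i j : Fin 3) (v : X) (s s' : Bool),
        ¬i = j → (v, s) = e.1 i → (v, s') = e.1 j → False :=
      fun e i j v s s' hij ha hb => hdist e.1 e.2 i j hij (by rw [← ha, ← hb])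
    first
    | (refine h1 _ _ _ ?_ g01; first | assumption | exact Ne.symm (by assumption))
    | (refine h1 _ _ _ ?_ g12; first | assumption | exact Ne.symm (by assumption))
    | (refine h1 _ _ _ ?_ g23; first | assumption | exact Ne.symm (by assumption))
    | (refine h1 _ _ _ ?_ g30; first | assumption | exact Ne.symm (by assumption))
    | (refine h2 _ _ _ _ _ _ ?_ g01 g23; first | assumption | exact Ne.symm (by assumption))
    | (refine h2 _ _ _ _ _ _ ?_ g12 g30; first | assumption | exact Ne.symm (by assumption)))
  all_goals try cases_type* Bool
  all_goals contradiction

/-- For an NAE3SAT instance `I` whose clauses have pairwise distinct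
variables: (a) `𝔾(I)` is properly 3-colourable iff `I` is NAE-satisfiable; (b) every edge
of `𝔾(I)` lies in a 3-clique; (c) `𝔾(I)` has no 4-cycle. -/
theorem stmt_10 {X : Type} [Fintype X] (I : Finset (NClause X))
    (hdist : ∀ e ∈ I, ∀ i j : Fin 3, i ≠ j → (e i).1 ≠ (e j).1) :
    -- (a)
    ((∃ c : GVert I → Fin 3, ∀ u v, (GI I).Adj u v → c u ≠ c v) ↔
      ∃ ν : X → Bool, NAESat3 I ν) ∧
    -- (b)
    (∀ u v : GVert I, (GI I).Adj u v →
      ∃ w : GVert I, (GI I).Adj u w ∧ (GI I).Adj v w) ∧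
    -- (c)
    ¬ ∃ u₀ u₁ u₂ u₃ : GVert I,
        u₀ ≠ u₁ ∧ u₀ ≠ u₂ ∧ u₀ ≠ u₃ ∧ u₁ ≠ u₂ ∧ u₁ ≠ u₃ ∧ u₂ ≠ u₃ ∧
        (GI I).Adj u₀ u₁ ∧ (GI I).Adj u₁ u₂ ∧ (GI I).Adj u₂ u₃ ∧ (GI I).Adj u₃ u₀ := by
  refine ⟨⟨fun h => ?_, fun h => ?_⟩, part_b, part_c hdist⟩
  · obtain ⟨c, hc⟩ := h
    exact forward_a c hc
  · obtain ⟨ν, hν⟩ := h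
    exact ⟨colB I ν, colB_proper ν hν⟩
end

section
/- Let I be an NAE3SAT instance over a finite variable set X, where each clause is an ordered triple of literals whose underlying variables are pairwise distinct, and assume: (i) every partial function from at most 2 elements of X to Bool extends to an assignment NAE-satisfying I; (ii) for all literals ℓ, ℓ' appearing in distinct clauses c, d of I, every consistent assignment of Boolean values to ℓ and ℓ' extends to an assignment NAE-satisfying I under which ℓ takes a majority value in c; (iii) for every literal ℓ occurring in a clause c such that the negation ¬ℓ occurs in a clause d, there is an assignment NAE-satisfying I under which ℓ takes a majority value in c and ¬ℓ takes a majority value in d; (iv) for each clause of I, every assignment of Boolean values to its three literals whose three values are not all equal extends to an assignment NAE-satisfying I. Then the graph 𝔾(I) is 2-robustly 3-colourable: for every partial function p defined on at most two vertices of 𝔾(I) with values in Fin 3 that assigns distinct values to any two adjacent vertices in its domain, there is a proper 3-colouring of 𝔾(I) extending p. -/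
/-- The `i`-th literal of the clause `e` takes a majority value in `e` under `ν`: its
value equals the value of at least two of the three literals of `e`. -/
def nMajority {X : Type} (ν : X → Bool) (e : NClause X) (i : Fin 3) : Prop :=
  2 ≤ (if nlitVal ν (e 0) = nlitVal ν (e i) then 1 else 0) +
      (if nlitVal ν (e 1) = nlitVal ν (e i) then 1 else 0) +
      (if nlitVal ν (e 2) = nlitVal ν (e i) then 1 else 0)

section Helpers

def litc (b : Bool) : Fin 3 := if b then 1 else 0
def majb (b : Fin 3 → Bool) : Bool := if b 0 = b 1 then b 0 else b 2
def NAEb (b : Fin 3 → Bool) : Prop := ¬(b 0 = b 1 ∧ b 1 = b 2)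
instance (b : Fin 3 → Bool) : Decidable (NAEb b) := by unfold NAEb; infer_instance
def fmaj (b : Fin 3 → Bool) : Fin 3 := if b 0 = majb b then 0 else 1
def posCol (b : Fin 3 → Bool) (t : Bool) (i : Fin 3) : Fin 3 :=
  if b i = majb b then (if ((i = fmaj b) ↔ t = true) then 2 else litc (!(majb b)))
  else litc (majb b)
def conCol (b : Fin 3 → Bool) (t : Bool) (i : Fin 3) : Fin 3 :=
  -(litc (b i) + posCol b t i)

lemma P1 : ∀ (b : Fin 3 → Bool) (t : Bool) (i j : Fin 3), NAEb b → i ≠ j →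
    posCol b t i ≠ posCol b t j := by decide
lemma P2 : ∀ (b : Fin 3 → Bool) (t : Bool) (i : Fin 3), posCol b t i ≠ litc (b i) := by decide
lemma C1 : ∀ (b : Fin 3 → Bool) (t : Bool) (i : Fin 3), conCol b t i ≠ litc (b i) := by decide
lemma C2 : ∀ (b : Fin 3 → Bool) (t : Bool) (i : Fin 3), conCol b t i ≠ posCol b t i := by decide
lemma pos_lit : ∀ (b : Fin 3 → Bool) (i : Fin 3), ∃ t, posCol b t i = litc (!(b i)) := by decide
lemma pos_two : ∀ (b : Fin 3 → Bool) (i : Fin 3), b i = majb b → ∃ t, posCol b t i = 2 := by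
  decide
lemma con_two : ∀ (b : Fin 3 → Bool) (i : Fin 3), ∃ t, conCol b t i = 2 := by decide
lemma con_lit : ∀ (b : Fin 3 → Bool) (i : Fin 3), b i = majb b →
    ∃ t, conCol b t i = litc (!(b i)) := by decide
lemma two_ne_litc : ∀ b, (2 : Fin 3) ≠ litc b := by decide
lemma litc_ne : ∀ b b', b ≠ b' → litc b ≠ litc b' := by decide
lemma pcs_eq : ∀ i j : Fin 3, i ≠ j → ∃ (b : Fin 3 → Bool) (t : Bool),
    NAEb b ∧ posCol b t i = conCol b t j := by decide
lemma pcs_ne : ∀ i j : Fin 3, i ≠ j → ∃ (b : Fin 3 → Bool) (t : Bool),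
    NAEb b ∧ posCol b t i ≠ conCol b t j := by decide
lemma ccs_eq : ∀ i j : Fin 3, i ≠ j → ∃ (b : Fin 3 → Bool) (t : Bool),
    NAEb b ∧ conCol b t i = conCol b t j := by decide
lemma ccs_ne : ∀ i j : Fin 3, i ≠ j → ∃ (b : Fin 3 → Bool) (t : Bool),
    NAEb b ∧ conCol b t i ≠ conCol b t j := by decide
def patM (i : Fin 3) : Fin 3 → Bool := fun j => j = i ∨ j = i + 1
lemma patM_good : ∀ i, NAEb (patM i) ∧ patM i i = majb (patM i) ∧ patM i i = true := by decide
def pat2 (i j : Fin 3) (x : Bool) : Fin 3 → Bool :=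
  fun k => if k = i then true else if k = j then x else !x
lemma pat2_good : ∀ (i j : Fin 3) (x : Bool), i ≠ j →
    NAEb (pat2 i j x) ∧ pat2 i j x i = majb (pat2 i j x) ∧ pat2 i j x i = true
    ∧ pat2 i j x j = x := by decide
lemma nmaj_iff : ∀ (b : Fin 3 → Bool) (i : Fin 3),
    (2 ≤ (if b 0 = b i then 1 else 0) + (if b 1 = b i then 1 else 0) +
      (if b 2 = b i then 1 else 0)) ↔ b i = majb b := by decide
lemma perm_lemma : ∀ a b a' b' : Fin 3, (a = b ↔ a' = b') →
    ∃ π : Equiv.Perm (Fin 3), π a = a' ∧ π b = b' := by decide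
lemma beq_ne_not : ∀ s s' v : Bool, s ≠ s' → ((s == s') == v) = !v := by decide
lemma beq_bne : ∀ s s' : Bool, ((s == s') == (s != s')) = false := by decide

def bOf {X : Type} (ν : X → Bool) (e : NClause X) : Fin 3 → Bool := fun j => nlitVal ν (e j)

def colOf {X : Type} (I : Finset (NClause X)) (ν : X → Bool) (ch : NClause X → Bool) :
    GVert I → Fin 3
  | Sum.inl _ => 2
  | Sum.inr (Sum.inl l) => litc (nlitVal ν l)
  | Sum.inr (Sum.inr (Sum.inl (e, i))) => posCol (bOf ν e.1) (ch e.1) i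
  | Sum.inr (Sum.inr (Sum.inr (e, i))) => conCol (bOf ν e.1) (ch e.1) i

def rnk {X : Type} {I : Finset (NClause X)} : GVert I → ℕ
  | Sum.inl _ => 0
  | Sum.inr (Sum.inl _) => 1
  | Sum.inr (Sum.inr (Sum.inl _)) => 2
  | Sum.inr (Sum.inr (Sum.inr _)) => 3

lemma nae_bOf {X : Type} {I : Finset (NClause X)} {ν : X → Bool}
    (hν : NAESat3 I ν) (e : {e : NClause X // e ∈ I}) : NAEb (bOf ν e.1) := hν e.1 e.2

lemma nlit_opp {X : Type} (ν : X → Bool) (w : X) (s s' : Bool) (h : s ≠ s') :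
    nlitVal ν (w, s) = !(nlitVal ν (w, s')) := by
  cases s <;> cases s' <;> simp_all [nlitVal]

lemma nlit_true {X : Type} (ν : X → Bool) (w : X) (s : Bool) (h : ν w = s) :
    nlitVal ν (w, s) = true := by cases s <;> simp_all [nlitVal]

lemma nlit_false {X : Type} (ν : X → Bool) (w : X) (s : Bool) (h : ν w = !s) :
    nlitVal ν (w, s) = false := by cases s <;> simp_all [nlitVal]

lemma nlit_of {X : Type} (ν : X → Bool) (w : X) (s s' : Bool) :
    nlitVal ν (w, s) = ((s == s') == nlitVal ν (w, s')) := by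
  cases s <;> cases s' <;> cases hw : ν w <;> simp [nlitVal, hw]

lemma adj_of_gRel {X : Type} {I : Finset (NClause X)} {x y : GVert I}
    (h : gRel I x y) (hne : x ≠ y) : (GI I).Adj x y := by
  rw [GI, SimpleGraph.fromRel_adj]; exact ⟨hne, Or.inl h⟩

lemma colOf_proper {X : Type} {I : Finset (NClause X)} {ν : X → Bool} {ch : NClause X → Bool}
    (hν : NAESat3 I ν) :
    ∀ x y, (GI I).Adj x y → colOf I ν ch x ≠ colOf I ν ch y := by
  have key : ∀ x y, gRel I x y → x ≠ y → colOf I ν ch x ≠ colOf I ν ch y := by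
    rintro (u | ⟨w, s⟩ | ⟨e, i⟩ | ⟨e, i⟩) (u' | ⟨w', s'⟩ | ⟨e', i'⟩ | ⟨e', i'⟩) hr hne <;>
      simp only [gRel] at hr <;> try exact hr.elim
    · exact two_ne_litc _
    · obtain ⟨rfl, hs⟩ := hr
      rw [show colOf I ν ch (Sum.inr (Sum.inl (w, s))) = litc (nlitVal ν (w, s)) from rfl,
        show colOf I ν ch (Sum.inr (Sum.inl (w, s'))) = litc (nlitVal ν (w, s')) from rfl,
        nlit_opp ν w s s' hs]
      exact litc_ne _ _ (Bool.not_ne_self _)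
    · rw [show colOf I ν ch (Sum.inr (Sum.inl (w, s))) = litc (nlitVal ν (w, s)) from rfl, hr]
      exact (P2 (bOf ν e'.1) (ch e'.1) i').symm
    · rw [show colOf I ν ch (Sum.inr (Sum.inl (w, s))) = litc (nlitVal ν (w, s)) from rfl, hr]
      exact (C1 (bOf ν e'.1) (ch e'.1) i').symm
    · subst hr
      have : i ≠ i' := by rintro rfl; exact hne rfl
      exact P1 _ _ _ _ (nae_bOf hν e) this
    · obtain ⟨rfl, rfl⟩ := hr
      exact C2 (bOf ν e.1) (ch e.1) i
  intro x y hadj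
  rw [GI, SimpleGraph.fromRel_adj] at hadj
  obtain ⟨hne, h | h⟩ := hadj
  · exact key x y h hne
  · exact (key y x h hne.symm).symm

lemma exists_nae {X : Type} {I : Finset (NClause X)}
    (h1 : ∀ x y : X, ∀ bx by' : Bool, (x = y → bx = by') →
      ∃ ν : X → Bool, NAESat3 I ν ∧ ν x = bx ∧ ν y = by') :
    ∃ ν, NAESat3 I ν := by
  by_cases hX : Nonempty X
  · obtain ⟨x⟩ := hX
    obtain ⟨ν, hν, -⟩ := h1 x x true true (fun _ => rfl)
    exact ⟨ν, hν⟩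
  · exact ⟨fun x => (hX ⟨x⟩).elim, fun e _ => (hX ⟨(e 0).1⟩).elim⟩

lemma nae_update {X : Type} [DecidableEq X] {I : Finset (NClause X)} {ν : X → Bool}
    (hν : NAESat3 I ν) (w : X) (c : Bool) (hw : ∀ d ∈ I, ∀ j : Fin 3, (d j).1 ≠ w) :
    NAESat3 I (Function.update ν w c) ∧ ∀ e ∈ I, bOf (Function.update ν w c) e = bOf ν e := by
  have hval : ∀ e ∈ I, ∀ j : Fin 3, nlitVal (Function.update ν w c) (e j) = nlitVal ν (e j) := by
    intro e he j
    unfold nlitVal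
    rw [Function.update_of_ne (hw e he j)]
  constructor
  · intro e he
    rw [hval e he 0, hval e he 1, hval e he 2]
    exact hν e he
  · intro e he
    funext j
    exact hval e he j

end Helpers

lemma lemA {X : Type} {I : Finset (NClause X)}
    (h1 : ∀ x y : X, ∀ bx by' : Bool, (x = y → bx = by') →
      ∃ ν : X → Bool, NAESat3 I ν ∧ ν x = bx ∧ ν y = by')
    (h2 : ∀ c ∈ I, ∀ d ∈ I, c ≠ d → ∀ i i' : Fin 3, ∀ bv bw : Bool,
      (c i = d i' → bv = bw) → ((c i).1 = (d i').1 → (c i).2 ≠ (d i').2 → bv = !bw) →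
      ∃ ν : X → Bool, NAESat3 I ν ∧ nlitVal ν (c i) = bv ∧ nlitVal ν (d i') = bw ∧
        nMajority ν c i)
    (h3 : ∀ c ∈ I, ∀ d ∈ I, ∀ i i' : Fin 3,
      (c i).1 = (d i').1 → (c i).2 ≠ (d i').2 →
      ∃ ν : X → Bool, NAESat3 I ν ∧ nMajority ν c i ∧ nMajority ν d i')
    (h4 : ∀ e ∈ I, ∀ b : Fin 3 → Bool, ¬(b 0 = b 1 ∧ b 1 = b 2) →
      ∃ ν : X → Bool, NAESat3 I ν ∧ ∀ i : Fin 3, nlitVal ν (e i) = b i) :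
    ∀ u v : GVert I, ¬(GI I).Adj u v →
      ∃ ν ch, NAESat3 I ν ∧ colOf I ν ch u = colOf I ν ch v := by
  classical
  have hex : ∃ ν, NAESat3 I ν := exists_nae h1
  have hreal : ∀ (e : {e : NClause X // e ∈ I}) (b : Fin 3 → Bool), NAEb b →
      ∃ ν, NAESat3 I ν ∧ bOf ν e.1 = b := by
    intro e b hb
    obtain ⟨ν, hν, hv⟩ := h4 e.1 e.2 b hb
    exact ⟨ν, hν, funext hv⟩
  have main : ∀ u v : GVert I, rnk u ≤ rnk v → ¬(GI I).Adj u v →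
      ∃ ν ch, NAESat3 I ν ∧ colOf I ν ch u = colOf I ν ch v := by
    rintro (u | ⟨w, s⟩ | ⟨e, i⟩ | ⟨e, i⟩) (u' | ⟨w', s'⟩ | ⟨e', i'⟩ | ⟨e', i'⟩) hrnk hA <;>
      try (simp [rnk] at hrnk)
    -- a / a
    · obtain ⟨ν, hν⟩ := hex
      exact ⟨ν, fun _ => true, hν, rfl⟩
    -- a / literal : adjacent
    · exact (hA (adj_of_gRel trivial (by simp))).elim
    -- a / position
    · obtain ⟨ν, hν, hb⟩ := hreal e' (patM i') (patM_good i').1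
      obtain ⟨t, ht⟩ := pos_two (bOf ν e'.1) i' (by rw [hb]; exact (patM_good i').2.1)
      exact ⟨ν, fun _ => t, hν, ht.symm⟩
    -- a / connector
    · obtain ⟨ν, hν⟩ := hex
      obtain ⟨t, ht⟩ := con_two (bOf ν e'.1) i'
      exact ⟨ν, fun _ => t, hν, ht.symm⟩
    -- literal / literal
    · by_cases hw : w = w'
      · subst hw
        by_cases hs : s = s'
        · subst hs
          obtain ⟨ν, hν⟩ := hex
          exact ⟨ν, fun _ => true, hν, rfl⟩
        · exact (hA (adj_of_gRel ⟨rfl, hs⟩ (by simp [hs]))).elim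
      · obtain ⟨ν, hν, hw1, hw2⟩ := h1 w w' s s' (fun h => absurd h hw)
        refine ⟨ν, fun _ => true, hν, ?_⟩
        show litc (nlitVal ν (w, s)) = litc (nlitVal ν (w', s'))
        rw [nlit_true ν w s hw1, nlit_true ν w' s' hw2]
    -- literal / position
    · have hni : (w, s) ≠ e'.1 i' := fun h => hA (adj_of_gRel h (by simp))
      by_cases hw : (e'.1 i').1 = w
      · have hs : s ≠ (e'.1 i').2 := by
          intro h
          exact hni (by rw [← hw, h])
        obtain ⟨ν, hν⟩ := hex
        obtain ⟨t, ht⟩ := pos_lit (bOf ν e'.1) i'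
        refine ⟨ν, fun _ => t, hν, ?_⟩
        show litc (nlitVal ν (w, s)) = posCol (bOf ν e'.1) t i'
        rw [ht]
        congr 1
        subst hw
        rw [nlit_of ν _ s (e'.1 i').2, beq_ne_not _ _ _ hs]
        rfl
      · obtain ⟨ν, hν, hw1, hw2⟩ := h1 w (e'.1 i').1 s (!(e'.1 i').2)
          (fun h => absurd h.symm hw)
        obtain ⟨t, ht⟩ := pos_lit (bOf ν e'.1) i'
        refine ⟨ν, fun _ => t, hν, ?_⟩
        show litc (nlitVal ν (w, s)) = posCol (bOf ν e'.1) t i'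
        have hbi : bOf ν e'.1 i' = false := nlit_false ν _ _ hw2
        rw [ht, hbi, nlit_true ν w s hw1]
        rfl
    -- literal / connector
    · have hni : (w, s) ≠ e'.1 i' := fun h => hA (adj_of_gRel h (by simp))
      suffices hGoal : ∃ ν, NAESat3 I ν ∧ bOf ν e'.1 i' = majb (bOf ν e'.1) ∧
          nlitVal ν (w, s) = !(bOf ν e'.1 i') by
        obtain ⟨ν, hν, hmaj, hval⟩ := hGoal
        obtain ⟨t, ht⟩ := con_lit (bOf ν e'.1) i' hmaj
        refine ⟨ν, fun _ => t, hν, ?_⟩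
        show litc (nlitVal ν (w, s)) = conCol (bOf ν e'.1) t i'
        rw [ht, hval]
      by_cases hi : (e'.1 i').1 = w
      · -- same variable as the i'-th literal, opposite sign
        have hs : s ≠ (e'.1 i').2 := by
          intro h
          exact hni (by rw [← hi, h])
        obtain ⟨ν, hν, hb⟩ := hreal e' (patM i') (patM_good i').1
        refine ⟨ν, hν, by rw [hb]; exact (patM_good i').2.1, ?_⟩
        subst hi
        rw [nlit_of ν _ s (e'.1 i').2, beq_ne_not _ _ _ hs]
        rfl
      · by_cases hj : ∃ j, (e'.1 j).1 = w
        · -- variable occurs elsewhere in the clause e'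
          obtain ⟨j, hjw⟩ := hj
          have hji : j ≠ i' := fun h => hi (h ▸ hjw)
          obtain ⟨hnae2, hmaj2, hbi2, hbj2⟩ := pat2_good i' j (s != (e'.1 j).2) (Ne.symm hji)
          obtain ⟨ν, hν, hb⟩ := hreal e' (pat2 i' j (s != (e'.1 j).2)) hnae2
          refine ⟨ν, hν, by rw [hb]; exact hmaj2, ?_⟩
          have hbi' : bOf ν e'.1 i' = true := by rw [hb]; exact hbi2
          rw [hbi']
          subst hjw
          rw [nlit_of ν _ s (e'.1 j).2]
          have hbj' : nlitVal ν ((e'.1 j).1, (e'.1 j).2) = (s != (e'.1 j).2) := by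
            have : bOf ν e'.1 j = (s != (e'.1 j).2) := by rw [hb]; exact hbj2
            exact this
          rw [hbj', beq_bne]
          rfl
        · by_cases hd : ∃ d ∈ I, ∃ j, (d j).1 = w
          · -- variable occurs in another clause d
            obtain ⟨d, hdI, j, hjw⟩ := hd
            have hde : d ≠ e'.1 := by
              rintro rfl
              exact hj ⟨j, hjw⟩
            obtain ⟨ν, hν, hv1, hv2, hmj⟩ := h2 e'.1 e'.2 d hdI (Ne.symm hde) i' j
              true (s != (d j).2)
              (fun h => absurd ((congrArg Prod.fst h).trans hjw) hi)
              (fun h _ => absurd (h.trans hjw) hi)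
            refine ⟨ν, hν, (nmaj_iff (bOf ν e'.1) i').mp hmj, ?_⟩
            have hbi' : bOf ν e'.1 i' = true := hv1
            rw [hbi']
            subst hjw
            rw [nlit_of ν _ s (d j).2]
            have hbj' : nlitVal ν ((d j).1, (d j).2) = (s != (d j).2) := hv2
            rw [hbj', beq_bne]
            rfl
          · -- variable occurs in no clause
            push_neg at hd
            obtain ⟨ν₀, hν₀, hb⟩ := hreal e' (patM i') (patM_good i').1
            obtain ⟨hν, hbbof⟩ := nae_update hν₀ w (!s) hd
            have hbe : bOf (Function.update ν₀ w (!s)) e'.1 = patM i' := by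
              rw [hbbof e'.1 e'.2, hb]
            refine ⟨Function.update ν₀ w (!s), hν, by rw [hbe]; exact (patM_good i').2.1, ?_⟩
            rw [hbe, (patM_good i').2.2,
              nlit_false (Function.update ν₀ w (!s)) w s (Function.update_self w (!s) ν₀)]
            rfl
    -- position / position
    · by_cases hee : e = e'
      · subst hee
        by_cases hii : i = i'
        · subst hii
          obtain ⟨ν, hν⟩ := hex
          exact ⟨ν, fun _ => true, hν, rfl⟩
        · exact (hA (adj_of_gRel rfl (by simp [hii]))).elim
      · have he1 : e.1 ≠ e'.1 := fun h => hee (Subtype.ext h)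
        by_cases hng : (e.1 i).1 = (e'.1 i').1 ∧ (e.1 i).2 ≠ (e'.1 i').2
        · obtain ⟨ν, hν, hm1, hm2⟩ := h3 e.1 e.2 e'.1 e'.2 i i' hng.1 hng.2
          obtain ⟨t1, ht1⟩ := pos_two (bOf ν e.1) i ((nmaj_iff (bOf ν e.1) i).mp hm1)
          obtain ⟨t2, ht2⟩ := pos_two (bOf ν e'.1) i' ((nmaj_iff (bOf ν e'.1) i').mp hm2)
          refine ⟨ν, fun c => if c = e.1 then t1 else t2, hν, ?_⟩
          show posCol (bOf ν e.1) (if e.1 = e.1 then t1 else t2) i =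
            posCol (bOf ν e'.1) (if e'.1 = e.1 then t1 else t2) i'
          rw [if_pos rfl, if_neg (Ne.symm he1), ht1, ht2]
        · obtain ⟨ν, hν, hv1, hv2, hmj⟩ := h2 e.1 e.2 e'.1 e'.2 he1 i i' true true
            (fun _ => rfl) (fun hv hs => absurd ⟨hv, hs⟩ hng)
          obtain ⟨t1, ht1⟩ := pos_lit (bOf ν e.1) i
          obtain ⟨t2, ht2⟩ := pos_lit (bOf ν e'.1) i'
          refine ⟨ν, fun c => if c = e.1 then t1 else t2, hν, ?_⟩
          show posCol (bOf ν e.1) (if e.1 = e.1 then t1 else t2) i =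
            posCol (bOf ν e'.1) (if e'.1 = e.1 then t1 else t2) i'
          rw [if_pos rfl, if_neg (Ne.symm he1), ht1, ht2,
            show bOf ν e.1 i = true from hv1, show bOf ν e'.1 i' = true from hv2]
    -- position / connector
    · by_cases hee : e = e'
      · subst hee
        have hii : i ≠ i' := by
          rintro rfl
          exact hA ((adj_of_gRel (x := Sum.inr (Sum.inr (Sum.inr (e, i))))
            (y := Sum.inr (Sum.inr (Sum.inl (e, i)))) ⟨rfl, rfl⟩ (by simp)).symm)
        obtain ⟨b, t, hnaeb, heq⟩ := pcs_eq i i' hii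
        obtain ⟨ν, hν, hb⟩ := hreal e b hnaeb
        refine ⟨ν, fun _ => t, hν, ?_⟩
        show posCol (bOf ν e.1) t i = conCol (bOf ν e.1) t i'
        rw [hb]
        exact heq
      · have he1 : e.1 ≠ e'.1 := fun h => hee (Subtype.ext h)
        obtain ⟨ν, hν, hb⟩ := hreal e (patM i) (patM_good i).1
        obtain ⟨t1, ht1⟩ := pos_two (bOf ν e.1) i (by rw [hb]; exact (patM_good i).2.1)
        obtain ⟨t2, ht2⟩ := con_two (bOf ν e'.1) i'
        refine ⟨ν, fun c => if c = e.1 then t1 else t2, hν, ?_⟩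
        show posCol (bOf ν e.1) (if e.1 = e.1 then t1 else t2) i =
          conCol (bOf ν e'.1) (if e'.1 = e.1 then t1 else t2) i'
        rw [if_pos rfl, if_neg (Ne.symm he1), ht1, ht2]
    -- connector / connector
    · by_cases hee : e = e'
      · subst hee
        by_cases hii : i = i'
        · subst hii
          obtain ⟨ν, hν⟩ := hex
          exact ⟨ν, fun _ => true, hν, rfl⟩
        · obtain ⟨b, t, hnaeb, heq⟩ := ccs_eq i i' hii
          obtain ⟨ν, hν, hb⟩ := hreal e b hnaeb
          refine ⟨ν, fun _ => t, hν, ?_⟩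
          show conCol (bOf ν e.1) t i = conCol (bOf ν e.1) t i'
          rw [hb]
          exact heq
      · have he1 : e.1 ≠ e'.1 := fun h => hee (Subtype.ext h)
        obtain ⟨ν, hν⟩ := hex
        obtain ⟨t1, ht1⟩ := con_two (bOf ν e.1) i
        obtain ⟨t2, ht2⟩ := con_two (bOf ν e'.1) i'
        refine ⟨ν, fun c => if c = e.1 then t1 else t2, hν, ?_⟩
        show conCol (bOf ν e.1) (if e.1 = e.1 then t1 else t2) i =
          conCol (bOf ν e'.1) (if e'.1 = e.1 then t1 else t2) i'
        rw [if_pos rfl, if_neg (Ne.symm he1), ht1, ht2]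
  intro u v hA
  rcases le_total (rnk u) (rnk v) with h | h
  · exact main u v h hA
  · obtain ⟨ν, ch, hν, hc⟩ := main v u h (fun a => hA a.symm)
    exact ⟨ν, ch, hν, hc.symm⟩

lemma lemB {X : Type} {I : Finset (NClause X)}
    (h1 : ∀ x y : X, ∀ bx by' : Bool, (x = y → bx = by') →
      ∃ ν : X → Bool, NAESat3 I ν ∧ ν x = bx ∧ ν y = by')
    (h4 : ∀ e ∈ I, ∀ b : Fin 3 → Bool, ¬(b 0 = b 1 ∧ b 1 = b 2) →
      ∃ ν : X → Bool, NAESat3 I ν ∧ ∀ i : Fin 3, nlitVal ν (e i) = b i) :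
    ∀ u v : GVert I, u ≠ v →
      ∃ ν ch, NAESat3 I ν ∧ colOf I ν ch u ≠ colOf I ν ch v := by
  classical
  have hex : ∃ ν, NAESat3 I ν := exists_nae h1
  have hreal : ∀ (e : {e : NClause X // e ∈ I}) (b : Fin 3 → Bool), NAEb b →
      ∃ ν, NAESat3 I ν ∧ bOf ν e.1 = b := by
    intro e b hb
    obtain ⟨ν, hν, hv⟩ := h4 e.1 e.2 b hb
    exact ⟨ν, hν, funext hv⟩
  have main : ∀ u v : GVert I, rnk u ≤ rnk v → ¬(GI I).Adj u v → u ≠ v →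
      ∃ ν ch, NAESat3 I ν ∧ colOf I ν ch u ≠ colOf I ν ch v := by
    rintro (u | ⟨w, s⟩ | ⟨e, i⟩ | ⟨e, i⟩) (u' | ⟨w', s'⟩ | ⟨e', i'⟩ | ⟨e', i'⟩) hrnk hA hne <;>
      try (simp [rnk] at hrnk)
    -- a / a : impossible
    · exact absurd (congrArg Sum.inl (Subsingleton.elim u u')) hne
    -- a / literal : adjacent, impossible
    · exact (hA (adj_of_gRel trivial (by simp))).elim
    -- a / position
    · obtain ⟨ν, hν⟩ := hex
      obtain ⟨t, ht⟩ := pos_lit (bOf ν e'.1) i'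
      refine ⟨ν, fun _ => t, hν, ?_⟩
      show (2 : Fin 3) ≠ posCol (bOf ν e'.1) t i'
      rw [ht]
      exact two_ne_litc _
    -- a / connector
    · obtain ⟨ν, hν, hb⟩ := hreal e' (patM i') (patM_good i').1
      obtain ⟨t, ht⟩ := con_lit (bOf ν e'.1) i' (by rw [hb]; exact (patM_good i').2.1)
      refine ⟨ν, fun _ => t, hν, ?_⟩
      show (2 : Fin 3) ≠ conCol (bOf ν e'.1) t i'
      rw [ht]
      exact two_ne_litc _
    -- literal / literal
    · by_cases hw : w = w'
      · subst hw
        have hs : s ≠ s' := by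
          intro h
          exact hne (by rw [h])
        exact (hA (adj_of_gRel ⟨rfl, hs⟩ hne)).elim
      · obtain ⟨ν, hν, hw1, hw2⟩ := h1 w w' s (!s') (fun h => absurd h hw)
        refine ⟨ν, fun _ => true, hν, ?_⟩
        show litc (nlitVal ν (w, s)) ≠ litc (nlitVal ν (w', s'))
        rw [nlit_true ν w s hw1, nlit_false ν w' s' hw2]
        exact litc_ne _ _ (by simp)
    -- literal / position
    · obtain ⟨ν, hν, hb⟩ := hreal e' (patM i') (patM_good i').1
      obtain ⟨t, ht⟩ := pos_two (bOf ν e'.1) i' (by rw [hb]; exact (patM_good i').2.1)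
      refine ⟨ν, fun _ => t, hν, ?_⟩
      show litc (nlitVal ν (w, s)) ≠ posCol (bOf ν e'.1) t i'
      rw [ht]
      exact Ne.symm (two_ne_litc _)
    -- literal / connector
    · obtain ⟨ν, hν⟩ := hex
      obtain ⟨t, ht⟩ := con_two (bOf ν e'.1) i'
      refine ⟨ν, fun _ => t, hν, ?_⟩
      show litc (nlitVal ν (w, s)) ≠ conCol (bOf ν e'.1) t i'
      rw [ht]
      exact Ne.symm (two_ne_litc _)
    -- position / position
    · by_cases hee : e = e'
      · subst hee
        have hii : i ≠ i' := by
          intro h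
          exact hne (by rw [h])
        exact (hA (adj_of_gRel rfl hne)).elim
      · have he1 : e.1 ≠ e'.1 := fun h => hee (Subtype.ext h)
        obtain ⟨ν, hν, hb⟩ := hreal e (patM i) (patM_good i).1
        obtain ⟨t1, ht1⟩ := pos_two (bOf ν e.1) i (by rw [hb]; exact (patM_good i).2.1)
        obtain ⟨t2, ht2⟩ := pos_lit (bOf ν e'.1) i'
        refine ⟨ν, fun c => if c = e.1 then t1 else t2, hν, ?_⟩
        show posCol (bOf ν e.1) (if e.1 = e.1 then t1 else t2) i ≠
          posCol (bOf ν e'.1) (if e'.1 = e.1 then t1 else t2) i'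
        rw [if_pos rfl, if_neg (Ne.symm he1), ht1, ht2]
        exact two_ne_litc _
    -- position / connector
    · by_cases hee : e = e'
      · subst hee
        have hii : i ≠ i' := by
          rintro rfl
          exact hA ((adj_of_gRel (x := Sum.inr (Sum.inr (Sum.inr (e, i))))
            (y := Sum.inr (Sum.inr (Sum.inl (e, i)))) ⟨rfl, rfl⟩ (by simp)).symm)
        obtain ⟨b, t, hnaeb, hne2⟩ := pcs_ne i i' hii
        obtain ⟨ν, hν, hb⟩ := hreal e b hnaeb
        refine ⟨ν, fun _ => t, hν, ?_⟩
        show posCol (bOf ν e.1) t i ≠ conCol (bOf ν e.1) t i'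
        rw [hb]
        exact hne2
      · have he1 : e.1 ≠ e'.1 := fun h => hee (Subtype.ext h)
        obtain ⟨ν, hν⟩ := hex
        obtain ⟨t1, ht1⟩ := pos_lit (bOf ν e.1) i
        obtain ⟨t2, ht2⟩ := con_two (bOf ν e'.1) i'
        refine ⟨ν, fun c => if c = e.1 then t1 else t2, hν, ?_⟩
        show posCol (bOf ν e.1) (if e.1 = e.1 then t1 else t2) i ≠
          conCol (bOf ν e'.1) (if e'.1 = e.1 then t1 else t2) i'
        rw [if_pos rfl, if_neg (Ne.symm he1), ht1, ht2]
        exact Ne.symm (two_ne_litc _)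
    -- connector / connector
    · by_cases hee : e = e'
      · subst hee
        have hii : i ≠ i' := by
          intro h
          exact hne (by rw [h])
        obtain ⟨b, t, hnaeb, hne2⟩ := ccs_ne i i' hii
        obtain ⟨ν, hν, hb⟩ := hreal e b hnaeb
        refine ⟨ν, fun _ => t, hν, ?_⟩
        show conCol (bOf ν e.1) t i ≠ conCol (bOf ν e.1) t i'
        rw [hb]
        exact hne2
      · have he1 : e.1 ≠ e'.1 := fun h => hee (Subtype.ext h)
        obtain ⟨ν, hν, hb⟩ := hreal e (patM i) (patM_good i).1
        obtain ⟨t1, ht1⟩ := con_lit (bOf ν e.1) i (by rw [hb]; exact (patM_good i).2.1)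
        obtain ⟨t2, ht2⟩ := con_two (bOf ν e'.1) i'
        refine ⟨ν, fun c => if c = e.1 then t1 else t2, hν, ?_⟩
        show conCol (bOf ν e.1) (if e.1 = e.1 then t1 else t2) i ≠
          conCol (bOf ν e'.1) (if e'.1 = e.1 then t1 else t2) i'
        rw [if_pos rfl, if_neg (Ne.symm he1), ht1, ht2]
        exact Ne.symm (two_ne_litc _)
  intro u v hne
  by_cases hAdj : (GI I).Adj u v
  · obtain ⟨ν, hν⟩ := hex
    exact ⟨ν, fun _ => true, hν, colOf_proper hν u v hAdj⟩
  · rcases le_total (rnk u) (rnk v) with h | h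
    · exact main u v h hAdj hne
    · obtain ⟨ν, ch, hν, hc⟩ := main v u h (fun a => hAdj a.symm) (Ne.symm hne)
      exact ⟨ν, ch, hν, hc.symm⟩


/-- If the NAE3SAT instance `I` (with pairwise distinct variables in
each clause) satisfies the flexibility conditions (i)–(iv), then `𝔾(I)` is 2-robustly
3-colourable: every partial proper pre-colouring of at most two vertices extends to a
proper 3-colouring. -/
theorem stmt_11 {X : Type} [Fintype X] (I : Finset (NClause X))
    (hdist : ∀ e ∈ I, ∀ i j : Fin 3, i ≠ j → (e i).1 ≠ (e j).1)
    -- (i) 2-robust NAE-satisfiability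
    (h1 : ∀ x y : X, ∀ bx by' : Bool, (x = y → bx = by') →
      ∃ ν : X → Bool, NAESat3 I ν ∧ ν x = bx ∧ ν y = by')
    -- (ii) consistent values on literals of distinct clauses, with a majority condition
    (h2 : ∀ c ∈ I, ∀ d ∈ I, c ≠ d → ∀ i i' : Fin 3, ∀ bv bw : Bool,
      (c i = d i' → bv = bw) → ((c i).1 = (d i').1 → (c i).2 ≠ (d i').2 → bv = !bw) →
      ∃ ν : X → Bool, NAESat3 I ν ∧ nlitVal ν (c i) = bv ∧ nlitVal ν (d i') = bw ∧
        nMajority ν c i)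
    -- (iii) a literal and its negation simultaneously in majority position
    (h3 : ∀ c ∈ I, ∀ d ∈ I, ∀ i i' : Fin 3,
      (c i).1 = (d i').1 → (c i).2 ≠ (d i').2 →
      ∃ ν : X → Bool, NAESat3 I ν ∧ nMajority ν c i ∧ nMajority ν d i')
    -- (iv) any not-all-equal pattern on a clause extends
    (h4 : ∀ e ∈ I, ∀ b : Fin 3 → Bool, ¬(b 0 = b 1 ∧ b 1 = b 2) →
      ∃ ν : X → Bool, NAESat3 I ν ∧ ∀ i : Fin 3, nlitVal ν (e i) = b i) :
    ∀ u v : GVert I, ∀ cu cv : Fin 3, (u = v → cu = cv) →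
      ((GI I).Adj u v → cu ≠ cv) →
      ∃ c : GVert I → Fin 3,
        (∀ x y, (GI I).Adj x y → c x ≠ c y) ∧ c u = cu ∧ c v = cv := by
  intro u v cu cv hucv hadj
  have hKey : ∃ ν ch, NAESat3 I ν ∧ ((colOf I ν ch u = colOf I ν ch v) ↔ cu = cv) := by
    by_cases hc : cu = cv
    · obtain ⟨ν, ch, hν, hEq⟩ := lemA h1 h2 h3 h4 u v (fun h => hadj h hc)
      exact ⟨ν, ch, hν, iff_of_true hEq hc⟩
    · obtain ⟨ν, ch, hν, hNe⟩ := lemB h1 h4 u v (fun h => hc (hucv h))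
      exact ⟨ν, ch, hν, iff_of_false hNe hc⟩
  obtain ⟨ν, ch, hν, hiff⟩ := hKey
  obtain ⟨π, hπu, hπv⟩ := perm_lemma _ _ cu cv hiff
  exact ⟨fun x => π (colOf I ν ch x),
    fun x y hxy h => colOf_proper hν x y hxy (π.injective h), hπu, hπv⟩
end

section
/- Let G be a simple graph such that: every edge of G lies in a 3-clique; G contains no 4-cycle (there are no four pairwise distinct vertices u₀, u₁, u₂, u₃ with u₀ adjacent to u₁, u₁ to u₂, u₂ to u₃, and u₃ to u₀); and G is 2-robustly 3-colourable. Let {i₁, i₂} and {i₁', i₂'} be two distinct edges of G, and suppose none of the following configurations occurs: (A) some vertex w is adjacent to each of i₁, i₂, i₁', i₂'; (B) there are adjacent vertices w, w' with w adjacent to both i₁ and i₂ and w' adjacent to both i₁' and i₂'; (C) some vertex among i₁', i₂' is adjacent to both i₁ and i₂, or some vertex among i₁, i₂ is adjacent to both i₁' and i₂'. Then there is a proper 3-colouring of G under which the set {i₁, i₂, i₁', i₂'} receives exactly 2 colours, and there is a proper 3-colouring of G under which the set {i₁, i₂, i₁', i₂'} receives exactly 3 colours. -/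
/-- Let `G` be a simple graph in which every edge lies in a 3-clique,
with no 4-cycle, and which is 2-robustly 3-colourable. For any two distinct edges
`{i₁, i₂}` and `{i₁', i₂'}` avoiding the three forbidden local configurations, there is a
proper 3-colouring giving the four vertices exactly 2 colours, and one giving them
exactly 3 colours. -/
theorem stmt_12 {V : Type} (G : SimpleGraph V)
    -- every edge lies in a 3-clique
    (htri : ∀ u v : V, G.Adj u v → ∃ w : V, G.Adj u w ∧ G.Adj v w)
    -- no 4-cycles
    (h4 : ¬ ∃ u₀ u₁ u₂ u₃ : V,
        u₀ ≠ u₁ ∧ u₀ ≠ u₂ ∧ u₀ ≠ u₃ ∧ u₁ ≠ u₂ ∧ u₁ ≠ u₃ ∧ u₂ ≠ u₃ ∧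
        G.Adj u₀ u₁ ∧ G.Adj u₁ u₂ ∧ G.Adj u₂ u₃ ∧ G.Adj u₃ u₀)
    -- 2-robust 3-colourability
    (hrob : ∀ u v : V, ∀ cu cv : Fin 3, (u = v → cu = cv) → (G.Adj u v → cu ≠ cv) →
      ∃ c : V → Fin 3, (∀ x y : V, G.Adj x y → c x ≠ c y) ∧ c u = cu ∧ c v = cv)
    (i₁ i₂ i₁' i₂' : V) (he : G.Adj i₁ i₂) (he' : G.Adj i₁' i₂')
    -- the two edges are distinct
    (hne : ¬((i₁ = i₁' ∧ i₂ = i₂') ∨ (i₁ = i₂' ∧ i₂ = i₁')))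
    -- configuration (A): no common neighbour of all four vertices
    (hA : ¬ ∃ w : V, G.Adj w i₁ ∧ G.Adj w i₂ ∧ G.Adj w i₁' ∧ G.Adj w i₂')
    -- configuration (B): no adjacent pair of vertices triangulating the two edges
    (hB : ¬ ∃ w w' : V, G.Adj w w' ∧ G.Adj w i₁ ∧ G.Adj w i₂ ∧ G.Adj w' i₁' ∧ G.Adj w' i₂')
    -- configuration (C): no endpoint of one edge adjacent to both endpoints of the other
    (hC : ¬((G.Adj i₁' i₁ ∧ G.Adj i₁' i₂) ∨ (G.Adj i₂' i₁ ∧ G.Adj i₂' i₂) ∨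
            (G.Adj i₁ i₁' ∧ G.Adj i₁ i₂') ∨ (G.Adj i₂ i₁' ∧ G.Adj i₂ i₂'))) :
    (∃ c : V → Fin 3, (∀ x y : V, G.Adj x y → c x ≠ c y) ∧
      ({c i₁, c i₂, c i₁', c i₂'} : Finset (Fin 3)).card = 2) ∧
    (∃ c : V → Fin 3, (∀ x y : V, G.Adj x y → c x ≠ c y) ∧
      ({c i₁, c i₂, c i₁', c i₂'} : Finset (Fin 3)).card = 3) := by
  obtain ⟨w, hw1, hw2⟩ := htri i₁ i₂ he
  obtain ⟨w', hw1', hw2'⟩ := htri i₁' i₂' he'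
  have key2 : ∀ a b a' b' : Fin 3, a ≠ b → a ≠ 0 → b ≠ 0 → a' ≠ b' → a' ≠ 0 → b' ≠ 0 →
      ({a, b, a', b'} : Finset (Fin 3)).card = 2 := by
    intro a b a' b'
    fin_cases a <;> fin_cases b <;> fin_cases a' <;> fin_cases b' <;> simp <;> decide
  have key3 : ∀ a b a' b' : Fin 3, a ≠ b → a ≠ 0 → b ≠ 0 → a' ≠ b' → a' ≠ 1 → b' ≠ 1 →
      ({a, b, a', b'} : Finset (Fin 3)).card = 3 := by
    intro a b a' b'
    fin_cases a <;> fin_cases b <;> fin_cases a' <;> fin_cases b' <;> simp <;> decide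
  constructor
  · have hnadj : ¬ G.Adj w w' := fun h =>
      hB ⟨w, w', h, hw1.symm, hw2.symm, hw1'.symm, hw2'.symm⟩
    obtain ⟨c, hc, hcw, hcw'⟩ := hrob w w' 0 0 (fun _ => rfl) (fun h => absurd h hnadj)
    refine ⟨c, hc, key2 _ _ _ _ (hc i₁ i₂ he) ?_ ?_ (hc i₁' i₂' he') ?_ ?_⟩
    · rw [← hcw]; exact hc i₁ w hw1
    · rw [← hcw]; exact hc i₂ w hw2
    · rw [← hcw']; exact hc i₁' w' hw1'
    · rw [← hcw']; exact hc i₂' w' hw2'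
  · have hneq : w ≠ w' := by
      rintro rfl
      exact hA ⟨w, hw1.symm, hw2.symm, hw1'.symm, hw2'.symm⟩
    obtain ⟨c, hc, hcw, hcw'⟩ := hrob w w' 0 1 (fun h => absurd h hneq) (fun _ => by decide)
    refine ⟨c, hc, key3 _ _ _ _ (hc i₁ i₂ he) ?_ ?_ (hc i₁' i₂' he') ?_ ?_⟩
    · rw [← hcw]; exact hc i₁ w hw1
    · rw [← hcw]; exact hc i₂ w hw2
    · rw [← hcw']; exact hc i₁' w' hw1'
    · rw [← hcw']; exact hc i₂' w' hw2'
end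

section
/- Let G be a simple graph, let ℓ ≥ 1, and suppose there is an injective map f from the vertices of G to functions Fin ℓ → Fin 3 such that for all vertices u, v: u and v are adjacent in G if and only if f(u)(i) ≠ f(v)(i) for every i (that is, G is isomorphic to an induced subgraph of the ℓ-th direct power of the complete graph K₃). Then there exist a subset S of the functions Fin ℓ → A(K₃), closed under the pointwise multiplication of the graph algebra A(K₃), and a surjective map h from S onto the graph algebra A(G) satisfying h(x·y) = h(x)·h(y) for all x, y ∈ S (that is, the graph algebra of G is a homomorphic image of a subalgebra of a finite direct power of the graph algebra of K₃). -/
/-- The multiplication of the graph algebra `A(H)` of a simple graph `H`: the carrier is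
`Option α` (the vertices together with `∞ = none`), with `u · v = v` when `u` and `v` are
adjacent and `∞` otherwise, and `∞` absorbing. -/
def gaMul {α : Type} (H : SimpleGraph α) [DecidableRel H.Adj] :
    Option α → Option α → Option α
  | some u, some v => if H.Adj u v then some v else none
  | _, _ => none

/-- If a simple graph `G` is isomorphic to an induced subgraph of the
`ℓ`-th direct power (`ℓ ≥ 1`) of the complete graph `K₃`, then the graph algebra `A(G)` is
a homomorphic image of a subalgebra (a subset closed under pointwise multiplication) of
the `ℓ`-fold direct power of the graph algebra `A(K₃)`. -/
theorem stmt_18 {V : Type} (G : SimpleGraph V) [DecidableRel G.Adj]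
    (ℓ : ℕ) (hℓ : 1 ≤ ℓ) (f : V → Fin ℓ → Fin 3) (hinj : Function.Injective f)
    (hadj : ∀ u v : V, G.Adj u v ↔ ∀ i : Fin ℓ, f u i ≠ f v i) :
    ∃ (S : Set (Fin ℓ → Option (Fin 3)))
      (hS : ∀ x ∈ S, ∀ y ∈ S,
        (fun i => gaMul (⊤ : SimpleGraph (Fin 3)) (x i) (y i)) ∈ S)
      (h : S → Option V),
      Function.Surjective h ∧
      ∀ x y : S,
        h ⟨fun i => gaMul (⊤ : SimpleGraph (Fin 3)) (x.1 i) (y.1 i),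
            hS x.1 x.2 y.1 y.2⟩ = gaMul G (h x) (h y) := by
  classical
  set e : V → (Fin ℓ → Option (Fin 3)) := fun v i => some (f v i) with he
  have einj : Function.Injective e := fun u v h =>
    hinj (funext fun i => Option.some.inj (congrFun h i))
  set S : Set (Fin ℓ → Option (Fin 3)) :=
    Set.range e ∪ {x | ∃ i, x i = none} with hSdef
  -- multiplication of two embedded vertices
  have hmul : ∀ u v : V,
      (fun i => gaMul (⊤ : SimpleGraph (Fin 3)) (e u i) (e v i))
        = fun i => if f u i ≠ f v i then some (f v i) else none := by
    intro u v
    funext i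
    simp [e, gaMul]
  have hnone : ∀ (x y : Fin ℓ → Option (Fin 3)) (i : Fin ℓ),
      x i = none ∨ y i = none →
      gaMul (⊤ : SimpleGraph (Fin 3)) (x i) (y i) = none := by
    intro x y i h
    rcases h with h | h
    · rw [h]; rfl
    · rw [h]; cases x i <;> rfl
  -- closure
  have hS : ∀ x ∈ S, ∀ y ∈ S,
      (fun i => gaMul (⊤ : SimpleGraph (Fin 3)) (x i) (y i)) ∈ S := by
    intro x hx y hy
    rcases hx with ⟨u, rfl⟩ | ⟨i, hi⟩
    · rcases hy with ⟨v, rfl⟩ | ⟨i, hi⟩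
      · by_cases hadjuv : G.Adj u v
        · left
          refine ⟨v, ?_⟩
          rw [hmul]
          funext i
          simp [e, (hadj u v).1 hadjuv i]
        · right
          have : ∃ i, f u i = f v i := by
            by_cases huv : u = v
            · exact ⟨⟨0, hℓ⟩, by rw [huv]⟩
            · by_contra hc
              push_neg at hc
              exact hadjuv ((hadj u v).2 hc)
          obtain ⟨i, hi⟩ := this
          exact ⟨i, by rw [hmul]; simp [hi]⟩
      · exact Or.inr ⟨i, hnone _ _ i (Or.inr hi)⟩
    · exact Or.inr ⟨i, hnone _ _ i (Or.inl hi)⟩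
  -- the homomorphism
  set hf : (Fin ℓ → Option (Fin 3)) → Option V :=
    fun x => if hx : ∃ v, x = e v then some hx.choose else none with hhf
  have hE : ∀ v : V, hf (e v) = some v := by
    intro v
    have hex : ∃ w, e v = e w := ⟨v, rfl⟩
    rw [hhf]
    simp only [dif_pos hex]
    exact congrArg some (einj hex.choose_spec).symm
  have hNone : ∀ x : Fin ℓ → Option (Fin 3), (∃ i, x i = none) → hf x = none := by
    intro x ⟨i, hi⟩
    rw [hhf]
    refine dif_neg ?_
    rintro ⟨v, rfl⟩
    simp [e] at hi
  refine ⟨S, hS, fun x => hf x.1, ?_, ?_⟩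
  · intro o
    match o with
    | none =>
      refine ⟨⟨fun _ => none, Or.inr ⟨⟨0, hℓ⟩, rfl⟩⟩, ?_⟩
      exact hNone _ ⟨⟨0, hℓ⟩, rfl⟩
    | some v => exact ⟨⟨e v, Or.inl ⟨v, rfl⟩⟩, hE v⟩
  · rintro ⟨x, hx⟩ ⟨y, hy⟩
    rcases hx with ⟨u, rfl⟩ | ⟨i, hi⟩
    · rcases hy with ⟨v, rfl⟩ | ⟨i, hi⟩
      · simp only [hE]
        by_cases hadjuv : G.Adj u v
        · have hprod : (fun i => gaMul (⊤ : SimpleGraph (Fin 3)) (e u i) (e v i)) = e v := by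
            rw [hmul]; funext i; simp [e, (hadj u v).1 hadjuv i]
          rw [hprod, hE]
          simp [gaMul, hadjuv]
        · have : ∃ i, f u i = f v i := by
            by_cases huv : u = v
            · exact ⟨⟨0, hℓ⟩, by rw [huv]⟩
            · by_contra hc
              push_neg at hc
              exact hadjuv ((hadj u v).2 hc)
          obtain ⟨i, hi⟩ := this
          have : hf (fun i => gaMul (⊤ : SimpleGraph (Fin 3)) (e u i) (e v i)) = none := by
            refine hNone _ ⟨i, ?_⟩
            have hc := congrFun (hmul u v) i
            rw [hc]; simp [hi]
          rw [this]
          simp [gaMul, hadjuv]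
      · have h1 : hf y = none := hNone _ ⟨i, hi⟩
        have h2 : hf (fun i => gaMul (⊤ : SimpleGraph (Fin 3)) (e u i) (y i)) = none :=
          hNone _ ⟨i, hnone _ _ i (Or.inr hi)⟩
        show hf (fun i => gaMul (⊤ : SimpleGraph (Fin 3)) (e u i) (y i))
            = gaMul G (hf (e u)) (hf y)
        rw [h1, h2]
        cases hf (e u) <;> rfl
    · have h1 : hf x = none := hNone _ ⟨i, hi⟩
      have h2 : hf (fun i => gaMul (⊤ : SimpleGraph (Fin 3)) (x i) (y i)) = none :=
        hNone _ ⟨i, hnone _ _ i (Or.inl hi)⟩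
      show hf (fun i => gaMul (⊤ : SimpleGraph (Fin 3)) (x i) (y i))
          = gaMul G (hf x) (hf y)
      rw [h1, h2]
      rfl
end
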